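/- Every sequent derivable in the Lambek calculus with cyclic shift L^∘ has a derivation that does not use the rule (cut); i.e., the cut rule is eliminable in L^∘. -/
import Mathlib


/-- Types of the Lambek calculus with the cyclic shift `L^∘`, built from
primitive types `P` by `\` (`ldiv A B = A \ B`), `/` (`rdiv B A = B / A`),
`·` (`mul`) and the cyclic shift `^∘` (`circ`). -/
inductive Fm (P : Type) : Type
  | prim : P → Fm P
  | ldiv : Fm P → Fm P → Fm P
  | rdiv : Fm P → Fm P → Fm P
  | mul  : Fm P → Fm P → Fm P
  | circ : Fm P → Fm P
deriving DecidableEq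

open Fm

/-- Derivability of sequents in the Lambek calculus with the cyclic shift `L^∘`.
The Boolean flag indicates whether the rule (cut) may be used:
`Dv P true` is `L^∘` (with cut), `Dv P false` is its cut-free part. -/
inductive Dv (P : Type) : Bool → List (Fm P) → Fm P → Prop
  | ax (c : Bool) (A : Fm P) :
      Dv P c [A] A
  | ldivL (c : Bool) (Γ Δ Pi : List (Fm P)) (A B C : Fm P) :
      Dv P c (Γ ++ B :: Δ) C → Dv P c Pi A → Pi ≠ [] →
      Dv P c (Γ ++ Pi ++ ldiv A B :: Δ) C
  | ldivR (c : Bool) (Pi : List (Fm P)) (A B : Fm P) :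
      Dv P c (A :: Pi) B → Pi ≠ [] →
      Dv P c Pi (ldiv A B)
  | rdivL (c : Bool) (Γ Δ Pi : List (Fm P)) (A B C : Fm P) :
      Dv P c (Γ ++ B :: Δ) C → Dv P c Pi A → Pi ≠ [] →
      Dv P c (Γ ++ rdiv B A :: (Pi ++ Δ)) C
  | rdivR (c : Bool) (Pi : List (Fm P)) (A B : Fm P) :
      Dv P c (Pi ++ [A]) B → Pi ≠ [] →
      Dv P c Pi (rdiv B A)
  | mulL (c : Bool) (Γ Δ : List (Fm P)) (A B C : Fm P) :
      Dv P c (Γ ++ A :: B :: Δ) C →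
      Dv P c (Γ ++ mul A B :: Δ) C
  | mulR (c : Bool) (Pi Psi : List (Fm P)) (A B : Fm P) :
      Dv P c Pi A → Dv P c Psi B → Pi ≠ [] → Psi ≠ [] →
      Dv P c (Pi ++ Psi) (mul A B)
  | circR (c : Bool) (Pi : List (Fm P)) (A : Fm P) :
      Dv P c Pi A →
      Dv P c Pi (circ A)
  | circL (c : Bool) (A B : Fm P) :
      Dv P c [B] (circ A) →
      Dv P c [circ B] (circ A)
  | circC (c : Bool) (Pi Psi : List (Fm P)) (A : Fm P) :
      Dv P c (Pi ++ Psi) (circ A) → Pi ≠ [] → Psi ≠ [] →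
      Dv P c (Psi ++ Pi) (circ A)
  | cut (Γ Δ Pi : List (Fm P)) (A B : Fm P) :
      Dv P true Pi A → Dv P true (Γ ++ A :: Δ) B → Pi ≠ [] →
      Dv P true (Γ ++ Pi ++ Δ) B


namespace CutElim

theorem splitApp {α : Type} {Γ Δ L₁ L₂ : List α} {A : α} (h : Γ ++ A :: Δ = L₁ ++ L₂) :
    (∃ Θ, L₁ = Γ ++ A :: Θ ∧ Δ = Θ ++ L₂) ∨ (∃ Θ, Γ = L₁ ++ Θ ∧ L₂ = Θ ++ A :: Δ) := by
  rcases List.append_eq_append_iff.mp h.symm with ⟨a, ha1, ha2⟩ | ⟨c, hc1, hc2⟩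
  · exact Or.inr ⟨a, ha1, ha2⟩
  · cases c with
    | nil => right; exact ⟨[], by simpa using hc1.symm, by simpa using hc2.symm⟩
    | cons x Θ =>
      left
      simp only [List.cons_append, List.cons.injEq] at hc2
      exact ⟨Θ, by rw [hc1, hc2.1], hc2.2⟩

theorem splitCons {α : Type} {Γ Δ L₁ L₂ : List α} {A X : α} (h : Γ ++ A :: Δ = L₁ ++ X :: L₂) :
    (Γ = L₁ ∧ A = X ∧ Δ = L₂) ∨ (∃ Θ, L₁ = Γ ++ A :: Θ ∧ Δ = Θ ++ X :: L₂) ∨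
      (∃ Θ, Γ = L₁ ++ X :: Θ ∧ L₂ = Θ ++ A :: Δ) := by
  rcases splitApp h with ⟨Θ, h1, h2⟩ | ⟨Θ, h1, h2⟩
  · exact Or.inr (Or.inl ⟨Θ, h1, h2⟩)
  · cases Θ with
    | nil => left; simp at h1 h2; exact ⟨h1, h2.1.symm, h2.2.symm⟩
    | cons x Θ' =>
      right; right
      simp only [List.cons_append, List.cons.injEq] at h2
      exact ⟨Θ', by rw [h1, h2.1], h2.2⟩

theorem eq_singleton {α : Type} {Γ Δ : List α} {A B : α} (h : Γ ++ A :: Δ = [B]) :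
    Γ = [] ∧ A = B ∧ Δ = [] := by
  cases Γ <;> simp_all

open Fm

def size {P : Type} : Fm P → ℕ
  | .prim _ => 1
  | .ldiv a b => size a + size b + 1
  | .rdiv a b => size a + size b + 1
  | .mul a b => size a + size b + 1
  | .circ a => size a + 1

theorem size_pos {P : Type} (A : Fm P) : 0 < size A := by
  cases A <;> simp [size]

/-- Cut-free derivability with a height bound. -/
inductive Dvh (P : Type) : ℕ → List (Fm P) → Fm P → Prop
  | ax (n : ℕ) (A : Fm P) : Dvh P n [A] A
  | ldivL (n : ℕ) (Γ Δ Pi : List (Fm P)) (A B C : Fm P) :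
      Dvh P n (Γ ++ B :: Δ) C → Dvh P n Pi A → Pi ≠ [] →
      Dvh P (n+1) (Γ ++ Pi ++ ldiv A B :: Δ) C
  | ldivR (n : ℕ) (Pi : List (Fm P)) (A B : Fm P) :
      Dvh P n (A :: Pi) B → Pi ≠ [] → Dvh P (n+1) Pi (ldiv A B)
  | rdivL (n : ℕ) (Γ Δ Pi : List (Fm P)) (A B C : Fm P) :
      Dvh P n (Γ ++ B :: Δ) C → Dvh P n Pi A → Pi ≠ [] →
      Dvh P (n+1) (Γ ++ rdiv B A :: (Pi ++ Δ)) C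
  | rdivR (n : ℕ) (Pi : List (Fm P)) (A B : Fm P) :
      Dvh P n (Pi ++ [A]) B → Pi ≠ [] → Dvh P (n+1) Pi (rdiv B A)
  | mulL (n : ℕ) (Γ Δ : List (Fm P)) (A B C : Fm P) :
      Dvh P n (Γ ++ A :: B :: Δ) C → Dvh P (n+1) (Γ ++ mul A B :: Δ) C
  | mulR (n : ℕ) (Pi Psi : List (Fm P)) (A B : Fm P) :
      Dvh P n Pi A → Dvh P n Psi B → Pi ≠ [] → Psi ≠ [] →
      Dvh P (n+1) (Pi ++ Psi) (mul A B)
  | circR (n : ℕ) (Pi : List (Fm P)) (A : Fm P) :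
      Dvh P n Pi A → Dvh P (n+1) Pi (circ A)
  | circL (n : ℕ) (A B : Fm P) :
      Dvh P n [B] (circ A) → Dvh P (n+1) [circ B] (circ A)
  | circC (n : ℕ) (Pi Psi : List (Fm P)) (A : Fm P) :
      Dvh P n (Pi ++ Psi) (circ A) → Pi ≠ [] → Psi ≠ [] →
      Dvh P (n+1) (Psi ++ Pi) (circ A)

theorem Dvh.mono {P : Type} {n : ℕ} {Γ : List (Fm P)} {A : Fm P}
    (h : Dvh P n Γ A) : ∀ m, n ≤ m → Dvh P m Γ A := by
  induction h with
  | ax n A => exact fun m _ => .ax m A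
  | ldivL n Γ Δ Pi A B C h1 h2 hne ih1 ih2 =>
    intro m hm
    obtain ⟨m', rfl⟩ : ∃ m', m = m' + 1 := ⟨m - 1, by omega⟩
    exact .ldivL m' Γ Δ Pi A B C (ih1 m' (by omega)) (ih2 m' (by omega)) hne
  | ldivR n Pi A B h1 hne ih1 =>
    intro m hm
    obtain ⟨m', rfl⟩ : ∃ m', m = m' + 1 := ⟨m - 1, by omega⟩
    exact .ldivR m' Pi A B (ih1 m' (by omega)) hne
  | rdivL n Γ Δ Pi A B C h1 h2 hne ih1 ih2 =>
    intro m hm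
    obtain ⟨m', rfl⟩ : ∃ m', m = m' + 1 := ⟨m - 1, by omega⟩
    exact .rdivL m' Γ Δ Pi A B C (ih1 m' (by omega)) (ih2 m' (by omega)) hne
  | rdivR n Pi A B h1 hne ih1 =>
    intro m hm
    obtain ⟨m', rfl⟩ : ∃ m', m = m' + 1 := ⟨m - 1, by omega⟩
    exact .rdivR m' Pi A B (ih1 m' (by omega)) hne
  | mulL n Γ Δ A B C h1 ih1 =>
    intro m hm
    obtain ⟨m', rfl⟩ : ∃ m', m = m' + 1 := ⟨m - 1, by omega⟩
    exact .mulL m' Γ Δ A B C (ih1 m' (by omega))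
  | mulR n Pi Psi A B h1 h2 hn1 hn2 ih1 ih2 =>
    intro m hm
    obtain ⟨m', rfl⟩ : ∃ m', m = m' + 1 := ⟨m - 1, by omega⟩
    exact .mulR m' Pi Psi A B (ih1 m' (by omega)) (ih2 m' (by omega)) hn1 hn2
  | circR n Pi A h1 ih1 =>
    intro m hm
    obtain ⟨m', rfl⟩ : ∃ m', m = m' + 1 := ⟨m - 1, by omega⟩
    exact .circR m' Pi A (ih1 m' (by omega))
  | circL n A B h1 ih1 =>
    intro m hm
    obtain ⟨m', rfl⟩ : ∃ m', m = m' + 1 := ⟨m - 1, by omega⟩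
    exact .circL m' A B (ih1 m' (by omega))
  | circC n Pi Psi A h1 hn1 hn2 ih1 =>
    intro m hm
    obtain ⟨m', rfl⟩ : ∃ m', m = m' + 1 := ⟨m - 1, by omega⟩
    exact .circC m' Pi Psi A (ih1 m' (by omega)) hn1 hn2

theorem Dv_of_Dvh {P : Type} {n : ℕ} {Γ : List (Fm P)} {A : Fm P}
    (h : Dvh P n Γ A) : Dv P false Γ A := by
  induction h with
  | ax _ A => exact .ax false A
  | ldivL _ Γ Δ Pi A B C _ _ hne ih1 ih2 => exact .ldivL false Γ Δ Pi A B C ih1 ih2 hne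
  | ldivR _ Pi A B _ hne ih1 => exact .ldivR false Pi A B ih1 hne
  | rdivL _ Γ Δ Pi A B C _ _ hne ih1 ih2 => exact .rdivL false Γ Δ Pi A B C ih1 ih2 hne
  | rdivR _ Pi A B _ hne ih1 => exact .rdivR false Pi A B ih1 hne
  | mulL _ Γ Δ A B C _ ih1 => exact .mulL false Γ Δ A B C ih1
  | mulR _ Pi Psi A B _ _ hn1 hn2 ih1 ih2 => exact .mulR false Pi Psi A B ih1 ih2 hn1 hn2
  | circR _ Pi A _ ih1 => exact .circR false Pi A ih1
  | circL _ A B _ ih1 => exact .circL false A B ih1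
  | circC _ Pi Psi A _ hn1 hn2 ih1 => exact .circC false Pi Psi A ih1 hn1 hn2

theorem Dvh_of_Dv {P : Type} : ∀ {c : Bool} {Γ : List (Fm P)} {A : Fm P},
    Dv P c Γ A → c = false → ∃ n, Dvh P n Γ A := by
  intro c Γ A h
  induction h with
  | ax c A => exact fun _ => ⟨0, .ax 0 A⟩
  | ldivL c Γ Δ Pi A B C h1 h2 hne ih1 ih2 =>
    intro hc
    obtain ⟨n1, d1⟩ := ih1 hc; obtain ⟨n2, d2⟩ := ih2 hc
    exact ⟨max n1 n2 + 1, .ldivL _ Γ Δ Pi A B C (d1.mono _ (le_max_left ..))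
      (d2.mono _ (le_max_right ..)) hne⟩
  | ldivR c Pi A B h1 hne ih1 =>
    intro hc; obtain ⟨n1, d1⟩ := ih1 hc
    exact ⟨n1 + 1, .ldivR _ Pi A B d1 hne⟩
  | rdivL c Γ Δ Pi A B C h1 h2 hne ih1 ih2 =>
    intro hc
    obtain ⟨n1, d1⟩ := ih1 hc; obtain ⟨n2, d2⟩ := ih2 hc
    exact ⟨max n1 n2 + 1, .rdivL _ Γ Δ Pi A B C (d1.mono _ (le_max_left ..))
      (d2.mono _ (le_max_right ..)) hne⟩
  | rdivR c Pi A B h1 hne ih1 =>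
    intro hc; obtain ⟨n1, d1⟩ := ih1 hc
    exact ⟨n1 + 1, .rdivR _ Pi A B d1 hne⟩
  | mulL c Γ Δ A B C h1 ih1 =>
    intro hc; obtain ⟨n1, d1⟩ := ih1 hc
    exact ⟨n1 + 1, .mulL _ Γ Δ A B C d1⟩
  | mulR c Pi Psi A B h1 h2 hn1 hn2 ih1 ih2 =>
    intro hc
    obtain ⟨n1, d1⟩ := ih1 hc; obtain ⟨n2, d2⟩ := ih2 hc
    exact ⟨max n1 n2 + 1, .mulR _ Pi Psi A B (d1.mono _ (le_max_left ..))
      (d2.mono _ (le_max_right ..)) hn1 hn2⟩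
  | circR c Pi A h1 ih1 =>
    intro hc; obtain ⟨n1, d1⟩ := ih1 hc
    exact ⟨n1 + 1, .circR _ Pi A d1⟩
  | circL c A B h1 ih1 =>
    intro hc; obtain ⟨n1, d1⟩ := ih1 hc
    exact ⟨n1 + 1, .circL _ A B d1⟩
  | circC c Pi Psi A h1 hn1 hn2 ih1 =>
    intro hc; obtain ⟨n1, d1⟩ := ih1 hc
    exact ⟨n1 + 1, .circC _ Pi Psi A d1 hn1 hn2⟩
  | cut Γ Δ Pi A B h1 h2 hne ih1 ih2 => intro hc; cases hc

/-- Cut with `Dv false` premises, for formulas of size at most `s`. -/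
def CutF (P : Type) (s : ℕ) : Prop :=
  ∀ A : Fm P, size A ≤ s → ∀ Γ Δ Pi B, Dv P false Pi A → Dv P false (Γ ++ A :: Δ) B →
    Pi ≠ [] → Dv P false (Γ ++ Pi ++ Δ) B

/-- Cut with height-bounded premises, total height at most `hb`, formula size at most `s`. -/
def CutH (P : Type) (s hb : ℕ) : Prop :=
  ∀ A : Fm P, ∀ n m, n + m ≤ hb → ∀ Γ Δ Pi B, size A ≤ s → Dvh P n Pi A →
    Dvh P m (Γ ++ A :: Δ) B → Pi ≠ [] → Dv P false (Γ ++ Pi ++ Δ) B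

end CutElim

namespace CutElim
open Fm

theorem ne_nil_left {α : Type} {a b : List α} (h : a ≠ []) : a ++ b ≠ [] := by
  intro hc; exact h (List.append_eq_nil_iff.mp hc).1

theorem prLdiv {P : Type} {s hb : ℕ} (cf : CutF P s) (ch : CutH P (s+1) hb)
    {n k : ℕ} {Γ' Δ' Pi Pi' : List (Fm P)} {A' B' B : Fm P}
    (hsz : size (ldiv A' B') ≤ s + 1)
    (h1 : Dvh P k (Γ' ++ B' :: Δ') B) (h2 : Dvh P k Pi' A') (hne' : Pi' ≠ [])
    (hL : Dvh P n Pi (ldiv A' B')) (hne : Pi ≠ []) (hh : n + k ≤ hb) :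
    Dv P false (Γ' ++ Pi' ++ Pi ++ Δ') B := by
  have hszA : size A' ≤ s + 1 := by have := size_pos B'; simp [size] at hsz; omega
  have hszB : size B' ≤ s := by have := size_pos A'; simp [size] at hsz; omega
  have hR' : Dvh P (k+1) ((Γ' ++ Pi') ++ ldiv A' B' :: Δ') B := by
    have := Dvh.ldivL k Γ' Δ' Pi' A' B' B h1 h2 hne'
    simpa [List.append_assoc] using this
  cases hL with
  | ax =>
    have := Dv.ldivL false Γ' Δ' Pi' A' B' B (Dv_of_Dvh h1) (Dv_of_Dvh h2) hne'
    simpa using this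
  | ldivR j Pi1 A1 B1 hp hnp =>
    have d1 : Dv P false ([] ++ Pi' ++ Pi) B' :=
      ch A' k j (by omega) [] Pi Pi' B' hszA h2 (by simpa using hp) hne'
    have d2 := cf B' hszB Γ' Δ' (Pi' ++ Pi) B (by simpa using d1) (Dv_of_Dvh h1)
      (ne_nil_left hne')
    simpa using d2
  | ldivL j Γ₀ Δ₀ Pi₀ A₀ B₀ C0 p1 p2 hne₀ =>
    have d1 := ch (ldiv A' B') j (k+1) (by omega) (Γ' ++ Pi') Δ' (Γ₀ ++ B₀ :: Δ₀) B hsz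
      p1 hR' (by simp)
    have := Dv.ldivL false (Γ' ++ Pi' ++ Γ₀) (Δ₀ ++ Δ') Pi₀ A₀ B₀ B (by simpa using d1)
      (Dv_of_Dvh p2) hne₀
    simpa using this
  | rdivL j Γ₀ Δ₀ Pi₀ A₀ B₀ C0 p1 p2 hne₀ =>
    have d1 := ch (ldiv A' B') j (k+1) (by omega) (Γ' ++ Pi') Δ' (Γ₀ ++ B₀ :: Δ₀) B hsz
      p1 hR' (by simp)
    have := Dv.rdivL false (Γ' ++ Pi' ++ Γ₀) (Δ₀ ++ Δ') Pi₀ A₀ B₀ B (by simpa using d1)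
      (Dv_of_Dvh p2) hne₀
    simpa using this
  | mulL j Γ₀ Δ₀ A₀ B₀ C0 p1 =>
    have d1 := ch (ldiv A' B') j (k+1) (by omega) (Γ' ++ Pi') Δ' (Γ₀ ++ A₀ :: B₀ :: Δ₀) B hsz
      p1 hR' (by simp)
    have := Dv.mulL false (Γ' ++ Pi' ++ Γ₀) (Δ₀ ++ Δ') A₀ B₀ B (by simpa using d1)
    simpa using this

theorem prRdiv {P : Type} {s hb : ℕ} (cf : CutF P s) (ch : CutH P (s+1) hb)
    {n k : ℕ} {Γ' Δ' Pi Pi' : List (Fm P)} {A' B' B : Fm P}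
    (hsz : size (rdiv B' A') ≤ s + 1)
    (h1 : Dvh P k (Γ' ++ B' :: Δ') B) (h2 : Dvh P k Pi' A') (hne' : Pi' ≠ [])
    (hL : Dvh P n Pi (rdiv B' A')) (hne : Pi ≠ []) (hh : n + k ≤ hb) :
    Dv P false (Γ' ++ Pi ++ Pi' ++ Δ') B := by
  have hszA : size A' ≤ s + 1 := by have := size_pos B'; simp [size] at hsz; omega
  have hszB : size B' ≤ s := by have := size_pos A'; simp [size] at hsz; omega
  have hR' : Dvh P (k+1) (Γ' ++ rdiv B' A' :: (Pi' ++ Δ')) B :=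
    Dvh.rdivL k Γ' Δ' Pi' A' B' B h1 h2 hne'
  cases hL with
  | ax =>
    have := Dv.rdivL false Γ' Δ' Pi' A' B' B (Dv_of_Dvh h1) (Dv_of_Dvh h2) hne'
    simpa using this
  | rdivR j Pi1 A1 B1 hp hnp =>
    have d1 : Dv P false (Pi ++ Pi' ++ []) B' :=
      ch A' k j (by omega) Pi [] Pi' B' hszA h2 (by simpa using hp) hne'
    have d2 := cf B' hszB Γ' Δ' (Pi ++ Pi') B (by simpa using d1) (Dv_of_Dvh h1)
      (ne_nil_left hne)
    simpa using d2
  | ldivL j Γ₀ Δ₀ Pi₀ A₀ B₀ C0 p1 p2 hne₀ =>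
    have d1 := ch (rdiv B' A') j (k+1) (by omega) Γ' (Pi' ++ Δ') (Γ₀ ++ B₀ :: Δ₀) B hsz
      p1 hR' (by simp)
    have := Dv.ldivL false (Γ' ++ Γ₀) (Δ₀ ++ Pi' ++ Δ') Pi₀ A₀ B₀ B (by simpa using d1)
      (Dv_of_Dvh p2) hne₀
    simpa using this
  | rdivL j Γ₀ Δ₀ Pi₀ A₀ B₀ C0 p1 p2 hne₀ =>
    have d1 := ch (rdiv B' A') j (k+1) (by omega) Γ' (Pi' ++ Δ') (Γ₀ ++ B₀ :: Δ₀) B hsz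
      p1 hR' (by simp)
    have := Dv.rdivL false (Γ' ++ Γ₀) (Δ₀ ++ Pi' ++ Δ') Pi₀ A₀ B₀ B (by simpa using d1)
      (Dv_of_Dvh p2) hne₀
    simpa using this
  | mulL j Γ₀ Δ₀ A₀ B₀ C0 p1 =>
    have d1 := ch (rdiv B' A') j (k+1) (by omega) Γ' (Pi' ++ Δ') (Γ₀ ++ A₀ :: B₀ :: Δ₀) B hsz
      p1 hR' (by simp)
    have := Dv.mulL false (Γ' ++ Γ₀) (Δ₀ ++ Pi' ++ Δ') A₀ B₀ B (by simpa using d1)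
    simpa using this

theorem prMul {P : Type} {s hb : ℕ} (cf : CutF P s) (ch : CutH P (s+1) hb)
    {n k : ℕ} {Γ' Δ' Pi : List (Fm P)} {A' B' B : Fm P}
    (hsz : size (mul A' B') ≤ s + 1)
    (h1 : Dvh P k (Γ' ++ A' :: B' :: Δ') B)
    (hL : Dvh P n Pi (mul A' B')) (hne : Pi ≠ []) (hh : n + k ≤ hb) :
    Dv P false (Γ' ++ Pi ++ Δ') B := by
  have hszA : size A' ≤ s + 1 := by have := size_pos B'; simp [size] at hsz; omega
  have hszB : size B' ≤ s := by have := size_pos A'; simp [size] at hsz; omega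
  have hR' : Dvh P (k+1) (Γ' ++ mul A' B' :: Δ') B := Dvh.mulL k Γ' Δ' A' B' B h1
  cases hL with
  | ax =>
    have := Dv.mulL false Γ' Δ' A' B' B (Dv_of_Dvh h1)
    simpa using this
  | mulR j Pi₁ Pi₂ A1 B1 hp1 hp2 hn1 hn2 =>
    have d1 : Dv P false (Γ' ++ Pi₁ ++ B' :: Δ') B :=
      ch A' j k (by omega) Γ' (B' :: Δ') Pi₁ B hszA hp1 h1 hn1
    have d2 := cf B' hszB (Γ' ++ Pi₁) Δ' Pi₂ B (Dv_of_Dvh hp2) (by simpa using d1) hn2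
    simpa using d2
  | ldivL j Γ₀ Δ₀ Pi₀ A₀ B₀ C0 p1 p2 hne₀ =>
    have d1 := ch (mul A' B') j (k+1) (by omega) Γ' Δ' (Γ₀ ++ B₀ :: Δ₀) B hsz
      p1 hR' (by simp)
    have := Dv.ldivL false (Γ' ++ Γ₀) (Δ₀ ++ Δ') Pi₀ A₀ B₀ B (by simpa using d1)
      (Dv_of_Dvh p2) hne₀
    simpa using this
  | rdivL j Γ₀ Δ₀ Pi₀ A₀ B₀ C0 p1 p2 hne₀ =>
    have d1 := ch (mul A' B') j (k+1) (by omega) Γ' Δ' (Γ₀ ++ B₀ :: Δ₀) B hsz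
      p1 hR' (by simp)
    have := Dv.rdivL false (Γ' ++ Γ₀) (Δ₀ ++ Δ') Pi₀ A₀ B₀ B (by simpa using d1)
      (Dv_of_Dvh p2) hne₀
    simpa using this
  | mulL j Γ₀ Δ₀ A₀ B₀ C0 p1 =>
    have d1 := ch (mul A' B') j (k+1) (by omega) Γ' Δ' (Γ₀ ++ A₀ :: B₀ :: Δ₀) B hsz
      p1 hR' (by simp)
    have := Dv.mulL false (Γ' ++ Γ₀) (Δ₀ ++ Δ') A₀ B₀ B (by simpa using d1)
    simpa using this

theorem prCirc {P : Type} {s hb : ℕ} (ch : CutH P (s+1) hb)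
    {n k : ℕ} {Pi : List (Fm P)} {A' B' : Fm P}
    (hsz : size (circ B') ≤ s + 1)
    (h1 : Dvh P k [B'] (circ A'))
    (hL : Dvh P n Pi (circ B')) (hne : Pi ≠ []) (hh : n + k ≤ hb) :
    Dv P false Pi (circ A') := by
  have hszB : size B' ≤ s := by simp [size] at hsz; omega
  have hR' : Dvh P (k+1) [circ B'] (circ A') := Dvh.circL k A' B' h1
  cases hL with
  | ax => exact Dv.circL false A' B' (Dv_of_Dvh h1)
  | circR j Pi1 A1 hp =>
    have d1 := ch B' j k (by omega) [] [] Pi (circ A') (by omega) hp (by simpa using h1) hne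
    simpa using d1
  | circL j A1 C hp =>
    have d1 := ch (circ B') j (k+1) (by omega) [] [] [C] (circ A') hsz hp
      (by simpa using hR') (by simp)
    exact Dv.circL false A' C (by simpa using d1)
  | circC j P0 Ps0 A1 hp hn1 hn2 =>
    have d1 := ch (circ B') j (k+1) (by omega) [] [] (P0 ++ Ps0) (circ A') hsz hp
      (by simpa using hR') (ne_nil_left hn1)
    exact Dv.circC false P0 Ps0 A' (by simpa using d1) hn1 hn2
  | ldivL j Γ₀ Δ₀ Pi₀ A₀ B₀ C0 p1 p2 hne₀ =>
    have d1 := ch (circ B') j (k+1) (by omega) [] [] (Γ₀ ++ B₀ :: Δ₀) (circ A') hsz p1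
      (by simpa using hR') (by simp)
    exact Dv.ldivL false Γ₀ Δ₀ Pi₀ A₀ B₀ (circ A') (by simpa using d1) (Dv_of_Dvh p2) hne₀
  | rdivL j Γ₀ Δ₀ Pi₀ A₀ B₀ C0 p1 p2 hne₀ =>
    have d1 := ch (circ B') j (k+1) (by omega) [] [] (Γ₀ ++ B₀ :: Δ₀) (circ A') hsz p1
      (by simpa using hR') (by simp)
    exact Dv.rdivL false Γ₀ Δ₀ Pi₀ A₀ B₀ (circ A') (by simpa using d1) (Dv_of_Dvh p2) hne₀
  | mulL j Γ₀ Δ₀ A₀ B₀ C0 p1 =>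
    have d1 := ch (circ B') j (k+1) (by omega) [] [] (Γ₀ ++ A₀ :: B₀ :: Δ₀) (circ A') hsz p1
      (by simpa using hR') (by simp)
    exact Dv.mulL false Γ₀ Δ₀ A₀ B₀ (circ A') (by simpa using d1)

end CutElim

namespace CutElim
open Fm

theorem master {P : Type} : ∀ s hb : ℕ, ∀ A : Fm P, ∀ n m : ℕ, n + m ≤ hb →
    ∀ E Γ Δ Pi : List (Fm P), ∀ B : Fm P, size A ≤ s → Dvh P n Pi A → Dvh P m E B →
    E = Γ ++ A :: Δ → Pi ≠ [] → Dv P false (Γ ++ Pi ++ Δ) B := by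
  intro s
  induction s with
  | zero =>
    intro hb A n m _ E Γ Δ Pi B hs _ _ _ _
    have := size_pos A; omega
  | succ s IH1 =>
    have cf : CutF P s := by
      intro A hsA Γ Δ Pi B d1 d2 hne
      obtain ⟨n1, e1⟩ := Dvh_of_Dv d1 rfl
      obtain ⟨n2, e2⟩ := Dvh_of_Dv d2 rfl
      exact IH1 (n1 + n2) A n1 n2 le_rfl _ Γ Δ Pi B hsA e1 e2 rfl hne
    intro hb
    induction hb with
    | zero =>
      intro A n m hnm E Γ Δ Pi B hs hL hR hE hne
      have hm : m = 0 := by omega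
      subst hm
      cases hR with
      | ax =>
        obtain ⟨rfl, rfl, rfl⟩ := eq_singleton hE.symm
        simpa using Dv_of_Dvh hL
    | succ hb IH2 =>
      have ch : CutH P (s+1) hb := by
        intro A n m hnm Γ Δ Pi B hs d1 d2 hne
        exact IH2 A n m hnm _ Γ Δ Pi B hs d1 d2 rfl hne
      intro A n m hnm E Γ Δ Pi B hs hL hR hE hne
      cases hR with
      | ax =>
        obtain ⟨rfl, rfl, rfl⟩ := eq_singleton hE.symm
        simpa using Dv_of_Dvh hL
      | ldivL k Γ' Δ' Pi' A' B' C' h1 h2 hne' =>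
        rcases splitApp (Γ := Γ) (Δ := Δ) (A := A) (L₁ := Γ')
            (L₂ := Pi' ++ ldiv A' B' :: Δ') (by simpa [List.append_assoc] using hE.symm) with
          ⟨Θ, rfl, rfl⟩ | ⟨Θ, rfl, h2'⟩
        · have d1 := ch A n k (by omega) Γ (Θ ++ B' :: Δ') Pi B hs hL (by simpa using h1) hne
          have := Dv.ldivL false (Γ ++ Pi ++ Θ) Δ' Pi' A' B' B (by simpa using d1)
            (Dv_of_Dvh h2) hne'
          simpa using this
        · rcases splitCons h2'.symm with ⟨rfl, rfl, rfl⟩ | ⟨Θ₂, rfl, rfl⟩ | ⟨Θ₂, rfl, rfl⟩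
          · exact prLdiv cf ch hs h1 h2 hne' hL hne (by omega)
          · have d1 := ch A n k (by omega) Θ Θ₂ Pi A' hs hL h2 hne
            have := Dv.ldivL false Γ' Δ' (Θ ++ Pi ++ Θ₂) A' B' B (Dv_of_Dvh h1) d1
              (by simp [hne])
            simpa using this
          · have d1 := ch A n k (by omega) (Γ' ++ B' :: Θ₂) Δ Pi B hs hL
              (by simpa using h1) hne
            have := Dv.ldivL false Γ' (Θ₂ ++ Pi ++ Δ) Pi' A' B' B (by simpa using d1)
              (Dv_of_Dvh h2) hne'
            simpa using this
      | rdivL k Γ' Δ' Pi' A' B' C' h1 h2 hne' =>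
        rcases splitCons hE.symm with ⟨rfl, rfl, rfl⟩ | ⟨Θ, rfl, rfl⟩ | ⟨Θ, rfl, hsp⟩
        · have := prRdiv cf ch hs h1 h2 hne' hL hne (by omega)
          simpa using this
        · have d1 := ch A n k (by omega) Γ (Θ ++ B' :: Δ') Pi B hs hL (by simpa using h1) hne
          have := Dv.rdivL false (Γ ++ Pi ++ Θ) Δ' Pi' A' B' B (by simpa using d1)
            (Dv_of_Dvh h2) hne'
          simpa using this
        · rcases splitApp hsp.symm with ⟨Θ₂, rfl, rfl⟩ | ⟨Θ₂, rfl, rfl⟩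
          · have d1 := ch A n k (by omega) Θ Θ₂ Pi A' hs hL h2 hne
            have := Dv.rdivL false Γ' Δ' (Θ ++ Pi ++ Θ₂) A' B' B (Dv_of_Dvh h1) d1
              (by simp [hne])
            simpa using this
          · have d1 := ch A n k (by omega) (Γ' ++ B' :: Θ₂) Δ Pi B hs hL
              (by simpa using h1) hne
            have := Dv.rdivL false Γ' (Θ₂ ++ Pi ++ Δ) Pi' A' B' B (by simpa using d1)
              (Dv_of_Dvh h2) hne'
            simpa using this
      | ldivR k Pi1 A1 B1 hp hnp =>
        subst hE
        have d1 := ch A n k (by omega) (A1 :: Γ) Δ Pi B1 hs hL (by simpa using hp) hne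
        exact Dv.ldivR false (Γ ++ Pi ++ Δ) A1 B1 (by simpa using d1) (by simp [hne])
      | rdivR k Pi1 A1 B1 hp hnp =>
        subst hE
        have d1 := ch A n k (by omega) Γ (Δ ++ [A1]) Pi B1 hs hL (by simpa using hp) hne
        exact Dv.rdivR false (Γ ++ Pi ++ Δ) A1 B1 (by simpa using d1) (by simp [hne])
      | mulL k Γ' Δ' A' B' C' h1 =>
        rcases splitCons hE.symm with ⟨rfl, rfl, rfl⟩ | ⟨Θ, rfl, rfl⟩ | ⟨Θ, rfl, rfl⟩
        · exact prMul cf ch hs h1 hL hne (by omega)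
        · have d1 := ch A n k (by omega) Γ (Θ ++ A' :: B' :: Δ') Pi B hs hL
            (by simpa using h1) hne
          have := Dv.mulL false (Γ ++ Pi ++ Θ) Δ' A' B' B (by simpa using d1)
          simpa using this
        · have d1 := ch A n k (by omega) (Γ' ++ A' :: B' :: Θ) Δ Pi B hs hL
            (by simpa using h1) hne
          have := Dv.mulL false Γ' (Θ ++ Pi ++ Δ) A' B' B (by simpa using d1)
          simpa using this
      | mulR k Pi₁ Pi₂ A1 B1 hp1 hp2 hn1 hn2 =>
        rcases splitApp hE.symm with ⟨Θ, rfl, rfl⟩ | ⟨Θ, rfl, rfl⟩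
        · have d1 := ch A n k (by omega) Γ Θ Pi A1 hs hL hp1 hne
          have := Dv.mulR false (Γ ++ Pi ++ Θ) Pi₂ A1 B1 (by simpa using d1)
            (Dv_of_Dvh hp2) (by simp [hne]) hn2
          simpa using this
        · have d1 := ch A n k (by omega) Θ Δ Pi B1 hs hL hp2 hne
          have := Dv.mulR false Pi₁ (Θ ++ Pi ++ Δ) A1 B1 (Dv_of_Dvh hp1)
            (by simpa using d1) hn1 (by simp [hne])
          simpa using this
      | circR k Pi1 A1 hp =>
        subst hE
        exact Dv.circR false _ A1 (ch A n k (by omega) Γ Δ Pi A1 hs hL hp hne)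
      | circL k A1 C hp =>
        obtain ⟨rfl, rfl, rfl⟩ := eq_singleton hE.symm
        have := prCirc ch hs hp hL hne (by omega)
        simpa using this
      | circC k P0 Ps0 A1 hp hn1 hn2 =>
        rcases splitApp hE.symm with ⟨Θ, rfl, rfl⟩ | ⟨Θ, rfl, rfl⟩
        · have d1 := ch A n k (by omega) (P0 ++ Γ) Θ Pi (circ A1) hs hL
            (by simpa using hp) hne
          have := Dv.circC false P0 (Γ ++ Pi ++ Θ) A1 (by simpa using d1) hn1 (by simp [hne])
          simpa using this
        · have d1 := ch A n k (by omega) Θ (Δ ++ Ps0) Pi (circ A1) hs hL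
            (by simpa using hp) hne
          have := Dv.circC false (Θ ++ Pi ++ Δ) Ps0 A1 (by simpa using d1)
            (by simp [hne]) hn2
          simpa using this

theorem cutDv {P : Type} {Γ Δ Pi : List (Fm P)} {A B : Fm P}
    (d1 : Dv P false Pi A) (d2 : Dv P false (Γ ++ A :: Δ) B) (hne : Pi ≠ []) :
    Dv P false (Γ ++ Pi ++ Δ) B := by
  obtain ⟨n1, e1⟩ := Dvh_of_Dv d1 rfl
  obtain ⟨n2, e2⟩ := Dvh_of_Dv d2 rfl
  exact master (size A) (n1 + n2) A n1 n2 le_rfl _ Γ Δ Pi B le_rfl e1 e2 rfl hne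

end CutElim

/-- Cut elimination for `L^∘`: every sequent derivable in the Lambek calculus
with the cyclic shift (using cut) has a cut-free derivation. -/
theorem cut_elimination_Lcirc (P : Type) (Γ : List (Fm P)) (B : Fm P)
    (h : Dv P true Γ B) : Dv P false Γ B := by
  suffices H : ∀ (c : Bool) (Γ : List (Fm P)) (B : Fm P), Dv P c Γ B → Dv P false Γ B from
    H true Γ B h
  intro c Γ B h
  induction h with
  | ax c A => exact .ax false A
  | ldivL c Γ Δ Pi A B C _ _ hne ih1 ih2 => exact .ldivL false Γ Δ Pi A B C ih1 ih2 hne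
  | ldivR c Pi A B _ hne ih1 => exact .ldivR false Pi A B ih1 hne
  | rdivL c Γ Δ Pi A B C _ _ hne ih1 ih2 => exact .rdivL false Γ Δ Pi A B C ih1 ih2 hne
  | rdivR c Pi A B _ hne ih1 => exact .rdivR false Pi A B ih1 hne
  | mulL c Γ Δ A B C _ ih1 => exact .mulL false Γ Δ A B C ih1
  | mulR c Pi Psi A B _ _ hn1 hn2 ih1 ih2 => exact .mulR false Pi Psi A B ih1 ih2 hn1 hn2
  | circR c Pi A _ ih1 => exact .circR false Pi A ih1
  | circL c A B _ ih1 => exact .circL false A B ih1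
  | circC c Pi Psi A _ hn1 hn2 ih1 => exact .circC false Pi Psi A ih1 hn1 hn2
  | cut Γ Δ Pi A B _ _ hne ih1 ih2 => exact CutElim.cutDv ih1 ih2 hne
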